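/- A partition ν is a t-core partition (none of its hook lengths is divisible by t) if and only if no box of ν has hook length exactly equal to t. -/
import Mathlib

noncomputable def conjFun (ν : ℕ → ℕ) (k : ℕ) : ℕ := Set.ncard {j : ℕ | k + 1 ≤ ν j}

noncomputable def hook (ν : ℕ → ℕ) (j k : ℕ) : ℕ := ν j + conjFun ν k - (j + k + 1)

lemma finS (ν : ℕ → ℕ) (N : ℕ) (hN : ∀ i, N ≤ i → ν i = 0) (m : ℕ) :
    {j : ℕ | m + 1 ≤ ν j}.Finite := by
  apply Set.Finite.subset (Set.finite_Iio N)
  intro j hj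
  simp only [Set.mem_setOf_eq] at hj
  simp only [Set.mem_Iio]
  by_contra h
  push_neg at h
  have := hN j h
  omega

lemma KL (ν : ℕ → ℕ) (hν : Antitone ν) (N : ℕ) (hN : ∀ i, N ≤ i → ν i = 0)
    (j m : ℕ) : m + 1 ≤ ν j ↔ j < conjFun ν m := by
  constructor
  · intro h
    have hsub : Set.Iic j ⊆ {i : ℕ | m + 1 ≤ ν i} := fun i hi =>
      le_trans h (hν hi)
    have hle := Set.ncard_le_ncard hsub (finS ν N hN m)
    have : (Set.Iic j).ncard = j + 1 := by
      rw [show Set.Iic j = ↑(Finset.Iic j) by simp, Set.ncard_coe_finset]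
      simp
    unfold conjFun
    omega
  · intro h
    by_contra hc
    push_neg at hc
    have hsub : {i : ℕ | m + 1 ≤ ν i} ⊆ Set.Iio j := by
      intro i hi
      simp only [Set.mem_setOf_eq] at hi
      simp only [Set.mem_Iio]
      by_contra hij
      push_neg at hij
      have := hν hij
      omega
    have hle := Set.ncard_le_ncard hsub (Set.finite_Iio j)
    have : (Set.Iio j).ncard = j := by
      rw [show Set.Iio j = ↑(Finset.Iio j) by simp, Set.ncard_coe_finset]
      simp
    unfold conjFun at h
    omega

lemma conj_le (ν : ℕ → ℕ) (N : ℕ) (hN : ∀ i, N ≤ i → ν i = 0) (k : ℕ) :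
    conjFun ν k ≤ conjFun ν 0 := by
  apply Set.ncard_le_ncard _ (finS ν N hN 0)
  intro j hj
  simp only [Set.mem_setOf_eq] at hj ⊢
  omega

/-- Every integer not of the form `ν i - i` is of the form `k + 1 - νᵗ_k`. -/
lemma cover (ν : ℕ → ℕ) (hν : Antitone ν) (N : ℕ) (hN : ∀ i, N ≤ i → ν i = 0)
    (c : ℤ) (h : ∀ i : ℕ, (ν i : ℤ) - i ≠ c) :
    ∃ k : ℕ, (k : ℤ) + 1 - conjFun ν k = c := by
  set L := conjFun ν 0 with hL
  -- Case 1: c ≤ -L : then c is in the beta set, contradiction.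
  by_cases hc0 : c ≤ -(L : ℤ)
  · exfalso
    have hcneg : 0 ≤ -c := by omega
    set j := (-c).toNat with hj
    have hjc : (j : ℤ) = -c := Int.toNat_of_nonneg hcneg
    have hjL : L ≤ j := by omega
    have hνj : ν j = 0 := by
      by_contra hne
      have h1 : 0 + 1 ≤ ν j := by omega
      have := (KL ν hν N hN j 0).mp h1
      omega
    exact h j (by rw [hνj]; omega)
  push_neg at hc0
  -- Q k : g k ≤ c
  classical
  set Q : ℕ → Prop := fun k => (k : ℤ) + 1 - conjFun ν k ≤ c with hQ
  set B : ℕ := (c + L).toNat with hB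
  have boundQ : ∀ m, Q m → m < B := by
    intro m hm
    have h1 : conjFun ν m ≤ L := conj_le ν N hN m
    have h2 : (m : ℤ) + 1 - conjFun ν m ≤ c := hm
    have : (m : ℤ) < c + L := by omega
    omega
  have hQ0 : Q 0 := by
    simp only [hQ]
    push_cast
    omega
  set k := Nat.findGreatest Q B with hk
  have hQk : Q k := Nat.findGreatest_spec (Nat.le_of_lt (boundQ 0 hQ0)) hQ0
  have hQk1 : ¬ Q (k + 1) := by
    intro hq
    exact Nat.findGreatest_is_greatest (Nat.lt_succ_self k) (Nat.le_of_lt (boundQ _ hq)) hq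
  by_cases heq : (k : ℤ) + 1 - conjFun ν k = c
  · exact ⟨k, heq⟩
  exfalso
  -- gap case
  have hgk : (k : ℤ) + 1 - conjFun ν k < c := lt_of_le_of_ne hQk heq
  have hgk1 : c < (k : ℤ) + 1 + 1 - conjFun ν (k + 1) := by
    by_contra hcon
    push_neg at hcon
    exact hQk1 (by simpa [hQ] using hcon)
  set K := conjFun ν k with hK
  set K' := conjFun ν (k + 1) with hK'
  have hcub : c ≤ (k : ℤ) + 1 - K' := by omega
  have hclb : (k : ℤ) + 2 - K ≤ c := by omega
  have hjnn : (0 : ℤ) ≤ (k : ℤ) + 1 - c := by omega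
  set j := ((k : ℤ) + 1 - c).toNat with hj
  have hjc : (j : ℤ) = (k : ℤ) + 1 - c := Int.toNat_of_nonneg hjnn
  have hjK : j < K := by omega
  have hjK' : K' ≤ j := by omega
  have h1 : k + 1 ≤ ν j := (KL ν hν N hN j k).mpr hjK
  have h2 : ν j ≤ k + 1 := by
    by_contra hcon
    push_neg at hcon
    have := (KL ν hν N hN j (k + 1)).mp (by omega)
    omega
  have hνj : ν j = k + 1 := le_antisymm h2 h1
  exact h j (by rw [hνj]; omega)

/-- disjointness: a hook-shifted value is never in the beta set. -/
lemma hook_cast (ν : ℕ → ℕ) (hν : Antitone ν) (N : ℕ) (hN : ∀ i, N ≤ i → ν i = 0)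
    (j k : ℕ) (hk : k < ν j) :
    (hook ν j k : ℤ) = (ν j : ℤ) + conjFun ν k - j - k - 1 := by
  have h1 : j < conjFun ν k := (KL ν hν N hN j k).mp (by omega)
  have h2 : j + k + 1 ≤ ν j + conjFun ν k := by omega
  unfold hook
  omega

lemma hook_notmem (ν : ℕ → ℕ) (hν : Antitone ν) (N : ℕ) (hN : ∀ i, N ≤ i → ν i = 0)
    (j k : ℕ) (hk : k < ν j) (i : ℕ) :
    (ν i : ℤ) - i ≠ (ν j : ℤ) - j - hook ν j k := by
  rw [hook_cast ν hν N hN j k hk]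
  intro heq
  -- ν i - i = k + 1 - conjFun ν k
  have key : (ν i : ℤ) + conjFun ν k = (i : ℤ) + k + 1 := by omega
  by_cases hki : k < ν i
  · have h1 : i < conjFun ν k := (KL ν hν N hN i k).mp (by omega)
    omega
  · push_neg at hki
    have h1 : ¬ (i < conjFun ν k) := fun hcon =>
      absurd ((KL ν hν N hN i k).mpr hcon) (by omega)
    push_neg at h1
    omega

lemma hook_exists (ν : ℕ → ℕ) (hν : Antitone ν) (N : ℕ) (hN : ∀ i, N ≤ i → ν i = 0)
    (j : ℕ) (c : ℤ) (hc : c < (ν j : ℤ) - j) (h : ∀ i : ℕ, (ν i : ℤ) - i ≠ c) :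
    ∃ k, k < ν j ∧ (hook ν j k : ℤ) = (ν j : ℤ) - j - c := by
  obtain ⟨k, hgk⟩ := cover ν hν N hN c h
  have hkj : k < ν j := by
    by_contra hcon
    push_neg at hcon
    have h1 : ¬ (j < conjFun ν k) := fun hlt =>
      absurd ((KL ν hν N hN j k).mpr hlt) (by omega)
    push_neg at h1
    omega
  refine ⟨k, hkj, ?_⟩
  rw [hook_cast ν hν N hN j k hkj]
  omega

lemma chain (P : ℤ → Prop) (t : ℤ) :
    ∀ (m : ℕ) (a : ℤ), P a → ¬ P (a - m * t) → ∃ b, P b ∧ ¬ P (b - t) := by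
  intro m
  induction m with
  | zero => intro a ha hna; simp at hna; exact absurd ha hna
  | succ n ih =>
    intro a ha hna
    by_cases hn : P (a - n * t)
    · refine ⟨a - n * t, hn, ?_⟩
      have : a - (n : ℤ) * t - t = a - (↑(n + 1)) * t := by push_cast; ring
      rw [this]
      exact hna
    · exact ih a ha hn

/-- A partition `ν` is a `t`-core (no hook length divisible by `t`) if and only if
no box of `ν` has hook length exactly `t`. -/
theorem tcore_iff_no_hook_eq (t : ℕ) (ht : 1 ≤ t) (ν : ℕ → ℕ) (hν : Antitone ν)
    (hfin : ∃ N, ∀ i, N ≤ i → ν i = 0) :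
    (∀ j k, k < ν j → ¬ t ∣ hook ν j k) ↔ (∀ j k, k < ν j → hook ν j k ≠ t) := by
  obtain ⟨N, hN⟩ := hfin
  constructor
  · intro h j k hk heq
    exact h j k hk (heq ▸ dvd_refl t)
  · intro h j k hk hdvd
    obtain ⟨m, hm⟩ := hdvd
    have hcast : (hook ν j k : ℤ) = (m : ℤ) * (t : ℤ) := by
      rw [hm]; push_cast; ring
    have hchain : ∃ b : ℤ, (∃ i : ℕ, (ν i : ℤ) - i = b) ∧
        ¬ (∃ i : ℕ, (ν i : ℤ) - i = b - t) := by
      apply chain (fun b => ∃ i : ℕ, (ν i : ℤ) - i = b) (t : ℤ) m ((ν j : ℤ) - j)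
        ⟨j, rfl⟩
      rw [← hcast]
      push_neg
      exact hook_notmem ν hν N hN j k hk
    obtain ⟨b, ⟨j', hj'⟩, hnb⟩ := hchain
    push_neg at hnb
    have hlt : b - t < (ν j' : ℤ) - j' := by rw [hj']; omega
    obtain ⟨k', hk', hhk'⟩ := hook_exists ν hν N hN j' (b - t) hlt hnb
    have : (hook ν j' k' : ℤ) = (t : ℤ) := by rw [hhk', hj']; ring
    exact h j' k' hk' (by exact_mod_cast this)
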